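/- Let {X_n : n ∈ (ℤ₊)^d} satisfy condition (MD): (1/|n|) ∑_{k ⪯ n} P(|X_k| > x) ≤ M P(|X| > x) for all x ≥ 0 and n. Let 1 ≤ p < 2, 1 ≤ r ≤ p. If E|X|^p < ∞, then ∑_{n=1}^∞ n^{d((p-2)/r - 1) - 1} ∑_{k ⪯ N} E[X_k²·1{|X_k| ≤ n^{d/r}}] < ∞, where N = (n,…,n). -/
import Mathlib

open MeasureTheory ENNReal Set

lemma tele_step {s : ℝ} (hs : s < 0) {a : ℝ} (ha : 1 ≤ a) :
    (-s) * (a + 1) ^ (s - 1) ≤ a ^ s - (a + 1) ^ s := by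
  have ha0 : (0:ℝ) < a := lt_of_lt_of_le one_pos ha
  obtain ⟨c, hc, hceq⟩ := exists_hasDerivAt_eq_slope (fun y => y ^ s)
      (fun y => s * y ^ (s - 1)) (by linarith : a < a + 1)
      (by
        apply ContinuousOn.rpow_const continuousOn_id
        intro y hy; left; exact ne_of_gt (lt_of_lt_of_le ha0 hy.1))
      (fun y hy => Real.hasDerivAt_rpow_const (Or.inl (ne_of_gt (lt_trans ha0 hy.1))))
  have hc0 : 0 < c := lt_trans ha0 hc.1
  have h1 : c ^ (s - 1) ≥ (a + 1) ^ (s - 1) :=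
    Real.rpow_le_rpow_of_nonpos hc0 hc.2.le (by linarith)
  have h2 : s * c ^ (s - 1) = (a + 1) ^ s - a ^ s := by
    rw [hceq]; ring_nf
  nlinarith [h1, h2]

lemma tail_sum' {s : ℝ} (hs : s < 0) {m : ℕ} (hm : 1 ≤ m) (K : ℕ) (hK : m ≤ K) :
    ∑ n ∈ Finset.Icc m K, ((n : ℝ)) ^ (s - 1)
      ≤ (m : ℝ) ^ (s - 1) + ((m : ℝ) ^ s - (K : ℝ) ^ s) / (-s) := by
  induction K, hK using Nat.le_induction with
  | base => simp
  | succ K hK ih =>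
      rw [Finset.sum_Icc_succ_top (by omega)]
      have h1 : (-s) * ((K : ℝ) + 1) ^ (s - 1) ≤ (K : ℝ) ^ s - ((K : ℝ) + 1) ^ s :=
        tele_step hs (by exact_mod_cast le_trans hm hK)
      have hns : (0:ℝ) < -s := by linarith
      push_cast
      have : ((K:ℝ) + 1) ^ (s-1) ≤ ((K : ℝ) ^ s - ((K:ℝ) + 1) ^ s) / (-s) := by
        rw [le_div_iff₀ hns]; linarith
      calc ∑ n ∈ Finset.Icc m K, ((n : ℝ)) ^ (s - 1) + ((K:ℝ)+1) ^ (s-1)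
          ≤ ((m : ℝ) ^ (s - 1) + ((m : ℝ) ^ s - (K : ℝ) ^ s) / (-s))
            + ((K : ℝ) ^ s - ((K:ℝ) + 1) ^ s) / (-s) := by linarith
        _ = (m : ℝ) ^ (s - 1) + ((m : ℝ) ^ s - ((K:ℝ)+1) ^ s) / (-s) := by ring

lemma tail_sum {s : ℝ} (hs : s < 0) {m : ℕ} (hm : 1 ≤ m) (K : ℕ) :
    ∑ n ∈ Finset.Icc m K, ((n : ℝ)) ^ (s - 1) ≤ (1 + 1 / (-s)) * (m : ℝ) ^ s := by
  have hm0 : (0:ℝ) < m := by exact_mod_cast hm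
  have hms : (0:ℝ) < (m:ℝ) ^ s := Real.rpow_pos_of_pos hm0 _
  have hns : (0:ℝ) < -s := by linarith
  rcases le_or_gt m K with h | h
  · refine le_trans (tail_sum' hs hm K h) ?_
    have h1 : (m : ℝ) ^ (s - 1) ≤ (m : ℝ) ^ s :=
      Real.rpow_le_rpow_of_exponent_le (by exact_mod_cast hm) (by linarith)
    have h2 : (0:ℝ) < (K : ℝ) ^ s := Real.rpow_pos_of_pos (lt_of_lt_of_le hm0 (by exact_mod_cast h)) _
    have h3 : ((m : ℝ) ^ s - (K : ℝ) ^ s) / (-s) ≤ (m : ℝ) ^ s / (-s) := by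
      gcongr
      linarith

    calc _ ≤ (m:ℝ)^s + (m : ℝ) ^ s / (-s) := by linarith
      _ = (1 + 1/(-s)) * (m:ℝ)^s := by ring
  · rw [Finset.Icc_eq_empty (by omega)]
    have := one_div_pos.mpr hns
    simp only [Finset.sum_empty]
    nlinarith [hms]

lemma sumS {s β : ℝ} (hs : s < 0) (hβ : 0 < β) {x : ℝ} (hx : 0 < x) :
    (∑' n : ℕ+, if x < ((n : ℕ) : ℝ) ^ β then ENNReal.ofReal (((n : ℕ) : ℝ) ^ (s - 1)) else 0)
      ≤ ENNReal.ofReal ((1 + 1 / (-s)) * (max 1 (x ^ (1 / β))) ^ s) := by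
  have hns : (0:ℝ) < -s := by linarith
  set q : ℝ := x ^ (1 / β) with hq
  have hq0 : 0 < q := Real.rpow_pos_of_pos hx _
  set m : ℕ := max 1 ⌈q⌉₊ with hmdef
  have hm1 : 1 ≤ m := le_max_left _ _
  have hmx : max 1 q ≤ (m : ℝ) := by
    rcases le_total q 1 with h | h
    · rw [max_eq_left h]; exact_mod_cast hm1
    · rw [max_eq_right h]
      exact le_trans (Nat.le_ceil q) (by exact_mod_cast le_max_right _ _)
  have hme : ∀ n : ℕ+, x < ((n : ℕ) : ℝ) ^ β → m ≤ (n : ℕ) := by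
    intro n hn
    have hn0 : (0:ℝ) ≤ ((n:ℕ):ℝ) := by positivity
    have h1 : q < ((n:ℕ):ℝ) := by
      have := Real.rpow_lt_rpow hx.le hn (one_div_pos.mpr hβ)
      rwa [← Real.rpow_mul hn0, mul_one_div_cancel hβ.ne', Real.rpow_one] at this
    exact max_le n.one_le (Nat.ceil_le.mpr h1.le)
  rw [ENNReal.tsum_eq_iSup_sum]
  apply iSup_le
  intro F
  rw [← Finset.sum_filter]
  set F' := F.filter (fun n : ℕ+ => x < ((n : ℕ) : ℝ) ^ β) with hF'
  rw [← ENNReal.ofReal_sum_of_nonneg (fun n _ => Real.rpow_nonneg (by positivity) _)]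
  apply ENNReal.ofReal_le_ofReal
  set G : Finset ℕ := F'.image (fun n : ℕ+ => (n : ℕ)) with hG
  have h1 : ∑ k ∈ G, (k : ℝ) ^ (s - 1) = ∑ n ∈ F', ((n : ℕ) : ℝ) ^ (s - 1) :=
    Finset.sum_image (fun a _ b _ h => PNat.coe_injective h)
  have h2 : G ⊆ Finset.Icc m (G.sup id) := by
    intro k hk
    obtain ⟨n, hn, rfl⟩ := Finset.mem_image.mp hk
    exact Finset.mem_Icc.mpr ⟨hme n (Finset.mem_filter.mp hn).2, Finset.le_sup (f := id) hk⟩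
  have h3 : ∑ k ∈ G, (k : ℝ) ^ (s - 1) ≤ ∑ k ∈ Finset.Icc m (G.sup id), (k : ℝ) ^ (s - 1) :=
    Finset.sum_le_sum_of_subset_of_nonneg h2 (fun k _ _ => Real.rpow_nonneg (by positivity) _)
  have h4 := tail_sum hs hm1 (G.sup id)
  have h5 : ((m:ℝ)) ^ s ≤ (max 1 q) ^ s :=
    Real.rpow_le_rpow_of_nonpos (lt_of_lt_of_le one_pos (le_max_left _ _)) hmx hs.le
  have h6 : (0:ℝ) ≤ 1 + 1 / (-s) := by positivity
  nlinarith [h1, h3, h4, h5, h6]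

lemma trunc_sq {Ω : Type*} [MeasurableSpace Ω] (P : Measure Ω) (f : Ω → ℝ)
    (hf : Measurable f) (t : ℝ) :
    ∫⁻ ω in {ω | |f ω| ≤ t}, ENNReal.ofReal (f ω ^ 2) ∂P
      ≤ 2 * ∫⁻ x in Ioi (0:ℝ),
          (Ioo (0:ℝ) t).indicator (fun x => P {ω | x < |f ω|} * ENNReal.ofReal x) x := by
  set g : Ω → ℝ := fun ω => if |f ω| ≤ t then |f ω| else 0 with hgdef
  have hS : MeasurableSet {ω | |f ω| ≤ t} := measurableSet_le hf.abs measurable_const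
  have hg : Measurable g := Measurable.ite hS hf.abs measurable_const
  have hg_nn : ∀ ω, 0 ≤ g ω := by
    intro ω; simp only [hgdef]; split <;> positivity
  have step1 : ∫⁻ ω in {ω | |f ω| ≤ t}, ENNReal.ofReal (f ω ^ 2) ∂P
      = ∫⁻ ω, ENNReal.ofReal (g ω ^ (2:ℝ)) ∂P := by
    rw [← lintegral_indicator hS]
    congr 1
    funext ω
    simp only [Set.indicator_apply, hgdef, Set.mem_setOf_eq]
    split
    · rw [Real.rpow_two, sq_abs]
    · rw [Real.zero_rpow (by norm_num), ENNReal.ofReal_zero]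
  have step2 := lintegral_rpow_eq_lintegral_meas_lt_mul P
    (ae_of_all _ hg_nn) hg.aemeasurable (by norm_num : (0:ℝ) < 2)
  rw [step1, step2]
  have h2 : ENNReal.ofReal (2:ℝ) = 2 := by norm_num
  rw [h2]
  apply mul_le_mul_right
  apply lintegral_mono
  intro x
  by_cases hx : x ∈ Ioo (0:ℝ) t
  · rw [Set.indicator_of_mem hx]
    have hsub : P {a | x < g a} ≤ P {ω | x < |f ω|} := by
      apply measure_mono
      intro ω hω
      simp only [Set.mem_setOf_eq, hgdef] at hω ⊢
      split at hω
      · exact hω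
      · linarith [abs_nonneg (f ω), hx.1]
    calc P {a | x < g a} * ENNReal.ofReal (x ^ ((2:ℝ) - 1))
        = P {a | x < g a} * ENNReal.ofReal x := by norm_num
      _ ≤ P {ω | x < |f ω|} * ENNReal.ofReal x := mul_le_mul_left hsub _
  · rw [Set.indicator_of_notMem hx]
    rcases le_or_gt x 0 with h | h
    · have h21 : ((2:ℝ)-1) = 1 := by norm_num
      simp only [h21]
      simp [Real.rpow_one, ENNReal.ofReal_eq_zero.mpr h]
    · have ht : t ≤ x := by
        by_contra hc; exact hx ⟨h, by linarith⟩
      have : {a | x < g a} = ∅ := by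
        ext ω; simp only [Set.mem_setOf_eq, Set.mem_empty_iff_false, iff_false, not_lt, hgdef]
        split
        · linarith
        · linarith
      simp [this]

lemma ptwise {s β p : ℝ} (hs : s < 0) (hβ : 0 < β) (hsb : s / β = p - 2) (hp : p ≤ 2)
    {x : ℝ} (hx : 0 < x) (c : ℝ≥0∞) :
    (∑' n : ℕ+, ENNReal.ofReal (((n : ℕ) : ℝ) ^ (s - 1)) *
        (Ioo (0:ℝ) (((n : ℕ) : ℝ) ^ β)).indicator (fun y => c * ENNReal.ofReal y) x)
      ≤ ENNReal.ofReal (1 + 1 / (-s)) * (c * ENNReal.ofReal (x ^ (p - 1))) := by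
  have hns : (0:ℝ) < -s := by linarith
  have key : ∀ n : ℕ+, ENNReal.ofReal (((n : ℕ) : ℝ) ^ (s - 1)) *
      (Ioo (0:ℝ) (((n : ℕ) : ℝ) ^ β)).indicator (fun y => c * ENNReal.ofReal y) x
      = (if x < ((n : ℕ) : ℝ) ^ β then ENNReal.ofReal (((n : ℕ) : ℝ) ^ (s - 1)) else 0)
        * (c * ENNReal.ofReal x) := by
    intro n
    rw [Set.indicator_apply]
    by_cases h : x < ((n : ℕ) : ℝ) ^ β
    · rw [if_pos (show x ∈ Ioo (0:ℝ) _ from ⟨hx, h⟩), if_pos h]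
    · rw [if_neg (fun hc => h hc.2), if_neg h, mul_zero, zero_mul]
  simp_rw [key]
  rw [ENNReal.tsum_mul_right]
  have h1 := sumS hs hβ hx (s := s)
  have h2 : ENNReal.ofReal ((1 + 1 / (-s)) * (max 1 (x ^ (1 / β))) ^ s) * (c * ENNReal.ofReal x)
      ≤ ENNReal.ofReal (1 + 1 / (-s)) * (c * ENNReal.ofReal (x ^ (p - 1))) := by
    rw [ENNReal.ofReal_mul (by positivity)]
    have h3 : (max 1 (x ^ (1 / β))) ^ s * x ≤ x ^ (p - 1) := by
      rcases le_or_gt x 1 with hx1 | hx1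
      · have hq1 : x ^ (1 / β) ≤ 1 := Real.rpow_le_one hx.le hx1 (by positivity)
        rw [max_eq_left hq1, Real.one_rpow, one_mul]
        calc x = x ^ (1:ℝ) := (Real.rpow_one x).symm
          _ ≤ x ^ (p - 1) := Real.rpow_le_rpow_of_exponent_ge hx hx1 (by linarith)
      · have hq1 : 1 ≤ x ^ (1 / β) := Real.one_le_rpow hx1.le (by positivity)
        rw [max_eq_right hq1, ← Real.rpow_mul hx.le, one_div_mul_eq_div, hsb]
        have heq : x ^ (p - 2) * x = x ^ (p - 1) := by
          nth_rewrite 2 [← Real.rpow_one x]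
          rw [← Real.rpow_add hx]
          congr 1; ring
        exact le_of_eq heq
    calc ENNReal.ofReal (1 + 1 / (-s)) * ENNReal.ofReal ((max 1 (x ^ (1 / β))) ^ s)
          * (c * ENNReal.ofReal x)
        = ENNReal.ofReal (1 + 1 / (-s)) *
            (c * (ENNReal.ofReal ((max 1 (x ^ (1 / β))) ^ s) * ENNReal.ofReal x)) := by ring
      _ ≤ ENNReal.ofReal (1 + 1 / (-s)) * (c * ENNReal.ofReal (x ^ (p - 1))) := by
          apply mul_le_mul_right
          apply mul_le_mul_right
          rw [← ENNReal.ofReal_mul (Real.rpow_nonneg (le_max_of_le_left zero_le_one) _)]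
          exact ENNReal.ofReal_le_ofReal h3
  exact le_trans (mul_le_mul_left h1 _) h2

/-- `pidx n = n₁ ⋯ n_d` for `n ∈ (ℤ₊)^d`. -/
def pidx {d : ℕ} (n : Fin d → ℕ+) : ℕ := ∏ i, (n i : ℕ)

theorem stmt13 {Ω : Type*} [MeasurableSpace Ω] (P : Measure Ω) [IsProbabilityMeasure P]
    {d : ℕ} (hd : 1 ≤ d)
    (X : (Fin d → ℕ+) → Ω → ℝ) (Y : Ω → ℝ)
    (hX : ∀ k, Measurable (X k)) (hY : Measurable Y)
    (M : ℝ) (hM : 0 ≤ M)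
    (hMD : ∀ x : ℝ, 0 ≤ x → ∀ n : Fin d → ℕ+,
      ∑ k ∈ Finset.Icc 1 n, P {ω : Ω | x < |X k ω|}
        ≤ (pidx n : ℝ≥0∞) * ENNReal.ofReal M * P {ω : Ω | x < |Y ω|})
    (p r : ℝ) (hp1 : 1 ≤ p) (hp2 : p < 2) (hr1 : 1 ≤ r) (hrp : r ≤ p)
    (hmom : ∫⁻ ω, ENNReal.ofReal (|Y ω| ^ p) ∂P < ∞) :
    ∑' n : ℕ+,
      ENNReal.ofReal (((n : ℕ) : ℝ) ^ ((d : ℝ) * ((p - 2) / r - 1) - 1)) *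
        ∑ k ∈ Finset.Icc 1 (fun _ : Fin d => n),
          ∫⁻ ω in {ω : Ω | |X k ω| ≤ ((n : ℕ) : ℝ) ^ ((d : ℝ) / r)},
            ENNReal.ofReal (X k ω ^ 2) ∂P < ∞ := by
  have hr0 : (0:ℝ) < r := lt_of_lt_of_le one_pos hr1
  have hd0 : (0:ℝ) < (d:ℝ) := by exact_mod_cast hd
  set β : ℝ := (d:ℝ) / r with hβdef
  have hβ : 0 < β := div_pos hd0 hr0
  set e : ℝ := (d:ℝ) * ((p - 2) / r - 1) - 1 with hedef
  set s : ℝ := (d:ℝ) * (p - 2) / r with hsdef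
  have hs : s < 0 := div_neg_of_neg_of_pos (mul_neg_of_pos_of_neg hd0 (by linarith)) hr0
  have hsb : s / β = p - 2 := by
    rw [hsdef, hβdef]
    field_simp
  set h : ℝ → ℝ≥0∞ := fun x => P {ω | x < |Y ω|} * ENNReal.ofReal x with hhdef
  have hanti : Antitone (fun x : ℝ => P {ω | x < |Y ω|}) := fun a b hab =>
    measure_mono (fun ω hω => lt_of_le_of_lt hab hω)
  have hmeas_tail : Measurable (fun x : ℝ => P {ω | x < |Y ω|}) := hanti.measurable
  have hmeas_h : Measurable h := hmeas_tail.mul ENNReal.measurable_ofReal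
  set t : ℕ+ → ℝ := fun n => ((n:ℕ):ℝ) ^ β with htdef
  set J : ℕ+ → ℝ≥0∞ := fun n => ∫⁻ x in Ioi (0:ℝ), (Ioo (0:ℝ) (t n)).indicator h x with hJdef
  -- per-n bound
  have key : ∀ n : ℕ+,
      ENNReal.ofReal (((n:ℕ):ℝ) ^ e) *
        ∑ k ∈ Finset.Icc 1 (fun _ : Fin d => n),
          ∫⁻ ω in {ω | |X k ω| ≤ ((n:ℕ):ℝ) ^ β}, ENNReal.ofReal (X k ω ^ 2) ∂P
      ≤ (2 * ENNReal.ofReal M) * (ENNReal.ofReal (((n:ℕ):ℝ) ^ (s - 1)) * J n) := by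
    intro n
    set N : Fin d → ℕ+ := fun _ => n with hNdef
    have hn0 : (0:ℝ) < ((n:ℕ):ℝ) := by exact_mod_cast n.pos
    set c : ℝ≥0∞ := (pidx N : ℝ≥0∞) * ENNReal.ofReal M with hcdef
    have hc_ne : c ≠ ∞ := ENNReal.mul_ne_top (ENNReal.natCast_ne_top _) ENNReal.ofReal_ne_top
    have step2 : ∑ k ∈ Finset.Icc 1 N,
        ∫⁻ ω in {ω | |X k ω| ≤ t n}, ENNReal.ofReal (X k ω ^ 2) ∂P
        ≤ 2 * (c * J n) := by
      have hb : ∀ k, Measurable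
          (fun x : ℝ => (Ioo (0:ℝ) (t n)).indicator
            (fun x => P {ω | x < |X k ω|} * ENNReal.ofReal x) x) := by
        intro k
        apply Measurable.indicator _ measurableSet_Ioo
        have hanti_k : Antitone (fun x : ℝ => P {ω | x < |X k ω|}) :=
          fun a b hab => measure_mono (fun ω hω => lt_of_le_of_lt hab hω)
        exact hanti_k.measurable.mul ENNReal.measurable_ofReal
      calc ∑ k ∈ Finset.Icc 1 N, ∫⁻ ω in {ω | |X k ω| ≤ t n}, ENNReal.ofReal (X k ω ^ 2) ∂P
          ≤ ∑ k ∈ Finset.Icc 1 N, 2 * ∫⁻ x in Ioi (0:ℝ),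
              (Ioo (0:ℝ) (t n)).indicator
                (fun x => P {ω | x < |X k ω|} * ENNReal.ofReal x) x :=
            Finset.sum_le_sum (fun k _ => trunc_sq P (X k) (hX k) (t n))
        _ = 2 * ∫⁻ x in Ioi (0:ℝ), ∑ k ∈ Finset.Icc 1 N,
              (Ioo (0:ℝ) (t n)).indicator
                (fun x => P {ω | x < |X k ω|} * ENNReal.ofReal x) x := by
            rw [← Finset.mul_sum, lintegral_finset_sum' _ (fun k _ => (hb k).aemeasurable)]
        _ ≤ 2 * ∫⁻ x in Ioi (0:ℝ), (Ioo (0:ℝ) (t n)).indicator (fun x => c * h x) x := by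
            apply mul_le_mul_right
            apply lintegral_mono
            intro x
            by_cases hx : x ∈ Ioo (0:ℝ) (t n)
            · simp only [Set.indicator_of_mem hx]
              show (∑ k ∈ Finset.Icc 1 N, P {ω | x < |X k ω|} * ENNReal.ofReal x)
                  ≤ (pidx N : ℝ≥0∞) * ENNReal.ofReal M *
                      (P {ω | x < |Y ω|} * ENNReal.ofReal x)
              rw [← Finset.sum_mul]
              calc (∑ k ∈ Finset.Icc 1 N, P {ω | x < |X k ω|}) * ENNReal.ofReal x
                  ≤ (pidx N : ℝ≥0∞) * ENNReal.ofReal M * P {ω | x < |Y ω|} *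
                      ENNReal.ofReal x := mul_le_mul_left (hMD x hx.1.le N) _
                _ = (pidx N : ℝ≥0∞) * ENNReal.ofReal M *
                      (P {ω | x < |Y ω|} * ENNReal.ofReal x) := by ring
            · simp [Set.indicator_of_notMem hx]
        _ = 2 * (c * J n) := by
            rw [hJdef]
            congr 1
            rw [← lintegral_const_mul' c _ hc_ne]
            congr 1
            funext x
            rw [Set.indicator_apply, Set.indicator_apply]
            split_ifs <;> simp
    have hpidx : (pidx N : ℝ≥0∞) = ENNReal.ofReal (((n:ℕ):ℝ) ^ ((d:ℕ):ℝ)) := by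
      have h1 : pidx N = (n:ℕ) ^ d := by simp [pidx, hNdef]
      rw [h1, ← ENNReal.ofReal_natCast]
      congr 1
      push_cast
      rw [Real.rpow_natCast]
    calc ENNReal.ofReal (((n:ℕ):ℝ) ^ e) *
          ∑ k ∈ Finset.Icc 1 N,
            ∫⁻ ω in {ω | |X k ω| ≤ t n}, ENNReal.ofReal (X k ω ^ 2) ∂P
        ≤ ENNReal.ofReal (((n:ℕ):ℝ) ^ e) * (2 * (c * J n)) := mul_le_mul_right step2 _
      _ = (2 * ENNReal.ofReal M) *
            ((ENNReal.ofReal (((n:ℕ):ℝ) ^ e) * (pidx N : ℝ≥0∞)) * J n) := by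
          rw [hcdef]; ring
      _ = (2 * ENNReal.ofReal M) * (ENNReal.ofReal (((n:ℕ):ℝ) ^ (s - 1)) * J n) := by
          congr 2
          rw [hpidx, ← ENNReal.ofReal_mul (Real.rpow_nonneg hn0.le _),
            ← Real.rpow_add hn0]
          congr 1
          rw [hedef, hsdef]
          push_cast
          ring
  -- global bound
  have main : (∑' n : ℕ+,
      ENNReal.ofReal (((n:ℕ):ℝ) ^ e) *
        ∑ k ∈ Finset.Icc 1 (fun _ : Fin d => n),
          ∫⁻ ω in {ω | |X k ω| ≤ ((n:ℕ):ℝ) ^ β}, ENNReal.ofReal (X k ω ^ 2) ∂P)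
      ≤ (2 * ENNReal.ofReal M) *
          (∑' n : ℕ+, ENNReal.ofReal (((n:ℕ):ℝ) ^ (s - 1)) * J n) := by
    rw [← ENNReal.tsum_mul_left]
    exact ENNReal.tsum_le_tsum key
  set I : ℝ≥0∞ := ∫⁻ x in Ioi (0:ℝ), P {ω | x < |Y ω|} * ENNReal.ofReal (x ^ (p - 1)) with hIdef
  have hT : (∑' n : ℕ+, ENNReal.ofReal (((n:ℕ):ℝ) ^ (s - 1)) * J n)
      ≤ ENNReal.ofReal (1 + 1 / (-s)) * I := by
    have h1 : ∀ n : ℕ+, ENNReal.ofReal (((n:ℕ):ℝ) ^ (s - 1)) * J n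
        = ∫⁻ x in Ioi (0:ℝ),
            ENNReal.ofReal (((n:ℕ):ℝ) ^ (s - 1)) * (Ioo (0:ℝ) (t n)).indicator h x := by
      intro n
      rw [hJdef, ← lintegral_const_mul' _ _ ENNReal.ofReal_ne_top]
    simp_rw [h1]
    rw [← lintegral_tsum (fun n => ((hmeas_h.indicator measurableSet_Ioo).const_mul _).aemeasurable)]
    calc ∫⁻ x in Ioi (0:ℝ), ∑' n : ℕ+,
            ENNReal.ofReal (((n:ℕ):ℝ) ^ (s - 1)) * (Ioo (0:ℝ) (t n)).indicator h x
        ≤ ∫⁻ x in Ioi (0:ℝ),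
            ENNReal.ofReal (1 + 1 / (-s)) * (P {ω | x < |Y ω|} * ENNReal.ofReal (x ^ (p - 1))) := by
          apply lintegral_mono_ae
          filter_upwards [ae_restrict_mem measurableSet_Ioi] with x hx
          have heq : ∀ n : ℕ+, (Ioo (0:ℝ) (t n)).indicator h x
              = (Ioo (0:ℝ) (t n)).indicator
                  (fun y => P {ω | x < |Y ω|} * ENNReal.ofReal y) x := by
            intro n
            rw [Set.indicator_apply, Set.indicator_apply]
          simp_rw [heq]
          exact ptwise hs hβ hsb hp2.le hx (P {ω | x < |Y ω|})
      _ = ENNReal.ofReal (1 + 1 / (-s)) * I := by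
          rw [hIdef, ← lintegral_const_mul' _ _ ENNReal.ofReal_ne_top]
  have hIfin : I < ∞ := by
    have hlc := lintegral_rpow_eq_lintegral_meas_lt_mul P
      (f := fun ω => |Y ω|) (ae_of_all _ (fun ω => abs_nonneg _)) hY.abs.aemeasurable
      (lt_of_lt_of_le one_pos hp1)
    rw [hlc] at hmom
    by_contra hI'
    rw [not_lt, top_le_iff] at hI'
    rw [hIdef] at hI'
    rw [hI', ENNReal.mul_top (by
      simp [ENNReal.ofReal_eq_zero, not_le]
      linarith)] at hmom
    exact (lt_irrefl _ hmom)
  refine lt_of_le_of_lt (main.trans (mul_le_mul_right hT _)) ?_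
  exact ENNReal.mul_lt_top
    (ENNReal.mul_lt_top (by norm_num) ENNReal.ofReal_lt_top)
    (ENNReal.mul_lt_top ENNReal.ofReal_lt_top hIfin)
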